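/- A compact metrizable space K is strongly countable dimensional if and only if K^[α] = ∅ for some countable ordinal α. -/

import Mathlib

open Set Function

noncomputable section

/-- Topology of pointwise convergence on `C(X, ℝ)`. -/
def ptTop (X : Type*) [TopologicalSpace X] : TopologicalSpace C(X, ℝ) :=
  TopologicalSpace.induced (fun f => (f : X → ℝ)) Pi.topologicalSpace

/-- `X` ℓ-dominates `Y`: a continuous linear map of `C_p(X)` onto `C_p(Y)`. -/
def LDominates (X Y : Type*) [TopologicalSpace X] [TopologicalSpace Y] : Prop :=
  ∃ L : C(X, ℝ) →ₗ[ℝ] C(Y, ℝ), @Continuous _ _ (ptTop X) (ptTop Y) L ∧ Surjective L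

/-- Covering dimension at most `n`. -/
def CovDimLE (X : Type*) [TopologicalSpace X] (n : ℕ) : Prop :=
  ∀ (ι : Type) (U : ι → Set X), Finite ι → (∀ i, IsOpen (U i)) → (⋃ i, U i) = univ →
    ∃ V : ι → Set X, (∀ i, IsOpen (V i)) ∧ (∀ i, V i ⊆ U i) ∧ (⋃ i, V i) = univ ∧
      ∀ x : X, {i | x ∈ V i}.ncard ≤ n + 1

/-- Finite (covering) dimensional space. -/
def FinDimSpace (X : Type*) [TopologicalSpace X] : Prop := ∃ n : ℕ, CovDimLE X n

/-- Strongly countable dimensional space. -/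
def StronglyCountableDim (X : Type*) [TopologicalSpace X] : Prop :=
  ∃ F : ℕ → Set X, (∀ n, IsClosed (F n)) ∧ (∀ n, FinDimSpace ↥(F n)) ∧ (⋃ n, F n) = univ

/-- `I(S)` relative to a subset: points of `S` with a relatively open
finite dimensional neighbourhood in `S`. -/
def fdI (X : Type*) [TopologicalSpace X] (S : Set X) : Set X :=
  {x | x ∈ S ∧ ∃ U : Set X, IsOpen U ∧ x ∈ U ∧ FinDimSpace ↥(U ∩ S)}

/-- The transfinite derived sets `K^[α]`. -/
def fdDerived (X : Type*) [TopologicalSpace X] : Ordinal → Set X := fun o =>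
  Ordinal.limitRecOn o (univ : Set X)
    (fun _ S => S \ fdI X S)
    (fun o _ ih => ⋂ (o' : Ordinal) (h : o' < o), ih o' h)

/-- A k_ω sequence for `X`. -/
def IsKOmegaSeq (X : Type*) [TopologicalSpace X] (K : ℕ → Set X) : Prop :=
  (∀ n, IsCompact (K n)) ∧ (∀ n, K n ⊆ K (n + 1)) ∧
  (∀ C : Set X, IsCompact C → ∃ n, C ⊆ K n) ∧
  (∀ A : Set X, (∀ n, ∃ F : Set X, IsClosed F ∧ A ∩ K n = F ∩ K n) → IsClosed A)

def KOmegaSpace (X : Type*) [TopologicalSpace X] : Prop := ∃ K : ℕ → Set X, IsKOmegaSeq X K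

/-- Submetrizable: there is a coarser metrizable topology. -/
def Submetrizable (X : Type*) [TopologicalSpace X] : Prop :=
  ∃ t' : TopologicalSpace X, (∀ s : Set X, @IsOpen X t' s → IsOpen s) ∧
    @TopologicalSpace.MetrizableSpace X t'

def Hemicompact (X : Type*) [TopologicalSpace X] : Prop :=
  ∃ K : ℕ → Set X, (∀ n, IsCompact (K n)) ∧ ∀ C : Set X, IsCompact C → ∃ n, C ⊆ K n

/-- `B` is (functionally) bounded in `X`. -/
def CBounded (X : Type*) [TopologicalSpace X] (B : Set X) : Prop :=
  ∀ f : C(X, ℝ), ∃ M : ℝ, ∀ x ∈ B, |f x| ≤ M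

/-- μ-space: closed bounded subsets are compact. -/
def MuSpace (X : Type*) [TopologicalSpace X] : Prop :=
  ∀ B : Set X, IsClosed B → CBounded X B → IsCompact B

/-- `C(K; A)`: continuous functions vanishing on `A`, as a submodule. -/
def Czero (K : Type*) [TopologicalSpace K] (A : Set K) : Submodule ℝ C(K, ℝ) where
  carrier := {f | ∀ x ∈ A, f x = 0}
  add_mem' := by intro f g hf hg x hx; simp [hf x hx, hg x hx]
  zero_mem' := by intro x hx; simp
  smul_mem' := by intro c f hf x hx; simp [hf x hx]

/-- Pointwise topology on `C(K;A)`. -/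
def ptTopSub {K : Type*} [TopologicalSpace K] (A : Set K) :
    TopologicalSpace (Czero K A) :=
  TopologicalSpace.induced (fun f => (f : C(K, ℝ))) (ptTop K)

/-- `c`-good map between relative function spaces. -/
def IsCGood {K₁ K₂ : Type*} [TopologicalSpace K₁] [CompactSpace K₁]
    [TopologicalSpace K₂] [CompactSpace K₂] (A₁ : Set K₁) (A₂ : Set K₂) (c : ℝ)
    (L : Czero K₁ A₁ →ₗ[ℝ] Czero K₂ A₂) : Prop :=
  @Continuous _ _ (ptTopSub A₁) (ptTopSub A₂) L ∧
  (∀ g : Czero K₁ A₁, ‖(L g : C(K₂, ℝ))‖ ≤ ‖(g : C(K₁, ℝ))‖) ∧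
  (∀ f : Czero K₂ A₂, ∃ g : Czero K₁ A₁, L g = f ∧
    ‖(g : C(K₁, ℝ))‖ ≤ c * ‖(f : C(K₂, ℝ))‖)

/-- `c`-good map between full function spaces. -/
def IsCGoodMap {K₁ K₂ : Type*} [TopologicalSpace K₁] [CompactSpace K₁]
    [TopologicalSpace K₂] [CompactSpace K₂] (c : ℝ)
    (L : C(K₁, ℝ) →ₗ[ℝ] C(K₂, ℝ)) : Prop :=
  @Continuous _ _ (ptTop K₁) (ptTop K₂) L ∧
  (∀ g : C(K₁, ℝ), ‖L g‖ ≤ ‖g‖) ∧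
  (∀ f : C(K₂, ℝ), ∃ g : C(K₁, ℝ), L g = f ∧ ‖g‖ ≤ c * ‖f‖)


section AuxDim
variable {X : Type*} [TopologicalSpace X]

lemma covDimLE_of_isEmpty (X : Type*) [TopologicalSpace X] [IsEmpty X] : CovDimLE X 0 := by
  intro ι U hfin hopen hcov
  exact ⟨U, hopen, fun i => subset_rfl, hcov, fun x => isEmptyElim x⟩

lemma finDimSpace_empty : FinDimSpace ↥(∅ : Set X) :=
  ⟨0, covDimLE_of_isEmpty _⟩

lemma ncard_inl_le {ι : Type*} [Finite ι] (S : Set (ι ⊕ Unit)) (T : Set ι)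
    (h : ∀ i ∈ T, Sum.inl i ∈ S) : T.ncard ≤ S.ncard := by
  have h1 : Sum.inl '' T ⊆ S := by rintro j ⟨i, hi, rfl⟩; exact h i hi
  calc T.ncard = (Sum.inl '' T).ncard := (Set.ncard_image_of_injective _ Sum.inl_injective).symm
    _ ≤ S.ncard := Set.ncard_le_ncard h1 (Set.toFinite S)

lemma covDimLE_mono_closed {A B : Set X} (hAB : A ⊆ B) (hA : IsClosed A) {n : ℕ}
    (h : CovDimLE ↥B n) : CovDimLE ↥A n := by
  intro ι U hfin hopen hcov
  choose W hWopen hUW using fun i => isOpen_induced_iff.mp (hopen i)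
  -- hUW i : Subtype.val ⁻¹' W i = U i
  set U' : ι ⊕ Unit → Set ↥B :=
    Sum.elim (fun i => Subtype.val ⁻¹' W i) (fun _ => Subtype.val ⁻¹' Aᶜ) with hU'
  have hU'open : ∀ j, IsOpen (U' j) := by
    rintro (i | _)
    · exact (hWopen i).preimage continuous_subtype_val
    · exact hA.isOpen_compl.preimage continuous_subtype_val
  have hU'cov : (⋃ j, U' j) = univ := by
    ext ⟨x, hxB⟩
    simp only [mem_iUnion, mem_univ, iff_true]
    by_cases hxA : x ∈ A
    · have : (⟨x, hxA⟩ : ↥A) ∈ ⋃ i, U i := hcov ▸ mem_univ _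
      rcases mem_iUnion.mp this with ⟨i, hi⟩
      rw [← hUW i] at hi
      exact ⟨Sum.inl i, hi⟩
    · exact ⟨Sum.inr (), hxA⟩
  obtain ⟨V', hV'open, hV'sub, hV'cov, hV'mult⟩ := h (ι ⊕ Unit) U' inferInstance hU'open hU'cov
  choose Z hZopen hVZ using fun j => isOpen_induced_iff.mp (hV'open j)
  -- hVZ j : Subtype.val ⁻¹' Z j = V' j
  refine ⟨fun i => Subtype.val ⁻¹' (Z (Sum.inl i) ∩ W i), ?_, ?_, ?_, ?_⟩
  · exact fun i => (((hZopen _).inter (hWopen i))).preimage continuous_subtype_val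
  · intro i x hx
    rw [← hUW i]; exact hx.2
  · ext a
    simp only [mem_iUnion, mem_univ, iff_true]
    set b : ↥B := ⟨a.1, hAB a.2⟩
    have hb : b ∈ ⋃ j, V' j := hV'cov ▸ mem_univ _
    rcases mem_iUnion.mp hb with ⟨j, hj⟩
    rcases j with i | u
    · refine ⟨i, ?_, ?_⟩
      · rw [← hVZ (Sum.inl i)] at hj; exact hj
      · have := hV'sub (Sum.inl i) hj
        exact this
    · exact absurd a.2 (hV'sub (Sum.inr u) hj)
  · intro a
    set b : ↥B := ⟨a.1, hAB a.2⟩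
    have hle : {i | a ∈ Subtype.val ⁻¹' (Z (Sum.inl i) ∩ W i)}.ncard ≤ {j | b ∈ V' j}.ncard := by
      refine ncard_inl_le _ _ fun i hi => ?_
      show b ∈ V' (Sum.inl i)
      rw [← hVZ (Sum.inl i)]
      exact hi.1
    exact hle.trans (hV'mult b)

end AuxDim


section RelOpen
variable {K : Type*} [MetricSpace K]

lemma covDimLE_relOpen {A B O : Set K} (hB : IsCompact B) (hO : IsOpen O)
    (hAO : A = B ∩ O) {n : ℕ} (h : CovDimLE ↥B n) : CovDimLE ↥A (3 * n + 2) := by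
  classical
  have hAB : A ⊆ B := hAO ▸ inter_subset_left
  set E : Set K := B \ A with hEdef
  have hEclosed : IsClosed E := by
    have hE2 : E = B ∩ Oᶜ := by
      rw [hEdef, hAO]; ext x; simp only [mem_diff, mem_inter_iff, mem_compl_iff]; tauto
    rw [hE2]; exact hB.isClosed.inter hO.isClosed_compl
  -- the closed pieces
  set C : ℕ → Set K := fun m => B ∩ {x | ∀ y ∈ E, 1 / (m + 1 : ℝ) ≤ dist x y} with hCdef
  have hCclosed : ∀ m, IsClosed (C m) := by
    intro m
    refine hB.isClosed.inter ?_
    have : {x | ∀ y ∈ E, 1 / (m + 1 : ℝ) ≤ dist x y} =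
        ⋂ y ∈ E, {x | 1 / (m + 1 : ℝ) ≤ dist x y} := by
      ext x; simp
    rw [this]
    exact isClosed_biInter fun y _ =>
      isClosed_le continuous_const (continuous_id.dist continuous_const)
  have hmpos : ∀ m : ℕ, (0:ℝ) < 1 / (m + 1) := fun m => by positivity
  have hCsubA : ∀ m, C m ⊆ A := by
    intro m x hx
    by_contra hxA
    have hxE : x ∈ E := ⟨hx.1, hxA⟩
    have := hx.2 x hxE
    simp only [dist_self] at this
    linarith [hmpos m]
  have hCsubB : ∀ m, C m ⊆ B := fun m => inter_subset_left
  have hCmono : ∀ {a b : ℕ}, a ≤ b → C a ⊆ C b := by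
    intro a b hab x hx
    refine ⟨hx.1, fun y hy => le_trans ?_ (hx.2 y hy)⟩
    apply one_div_le_one_div_of_le (by positivity)
    have : (a:ℝ) ≤ b := Nat.cast_le.mpr hab
    linarith
  -- the open separators
  set Op : ℕ → Set K := fun m =>
    if E.Nonempty then {x | 1 / (m + 1 : ℝ) < Metric.infDist x E} else univ with hOpdef
  have hOpopen : ∀ m, IsOpen (Op m) := by
    intro m
    simp only [hOpdef]
    split_ifs
    · exact isOpen_lt continuous_const (Metric.continuous_infDist_pt E)
    · exact isOpen_univ
  have hCsubOp : ∀ m, C m ⊆ Op (m + 1) := by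
    intro m x hx
    by_cases hEne : E.Nonempty
    · have hgoal : 1 / ((m:ℝ) + 1 + 1) < Metric.infDist x E := by
        by_contra hcon
        push_neg at hcon
        have hlt : Metric.infDist x E < 1 / (m + 1 : ℝ) := by
          refine lt_of_le_of_lt hcon ?_
          apply one_div_lt_one_div_of_lt (by positivity)
          linarith
        obtain ⟨y, hyE, hy⟩ := (Metric.infDist_lt_iff hEne).mp hlt
        exact absurd (hx.2 y hyE) (not_le.mpr hy)
      show x ∈ Op (m + 1)
      simp only [hOpdef, if_pos hEne, mem_setOf_eq]
      push_cast
      exact hgoal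
    · show x ∈ Op (m + 1)
      simp [hOpdef, hEne]
  have hOpB : ∀ m, Op m ∩ B ⊆ C m := by
    intro m x hx
    refine ⟨hx.2, fun y hy => ?_⟩
    have hne : E.Nonempty := ⟨y, hy⟩
    have hx1 := hx.1
    simp only [hOpdef, if_pos hne, mem_setOf_eq] at hx1
    exact le_trans (le_of_lt hx1) (Metric.infDist_le_dist_of_mem hy)
  have hAcup : A ⊆ ⋃ m, C m := by
    intro x hxA
    by_cases hEne : E.Nonempty
    · have hxE : x ∉ E := fun hxE => hxE.2 hxA
      have hpos : 0 < Metric.infDist x E :=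
        (hEclosed.notMem_iff_infDist_pos hEne).mp hxE
      obtain ⟨m, hm⟩ := exists_nat_one_div_lt hpos
      refine mem_iUnion.mpr ⟨m, hAB hxA, fun y hy => ?_⟩
      exact le_trans (le_of_lt hm) (Metric.infDist_le_dist_of_mem hy)
    · refine mem_iUnion.mpr ⟨0, hAB hxA, fun y hy => absurd ⟨y, hy⟩ hEne⟩
  -- annuli
  set Ann : ℕ → Set K := fun m => if m = 0 then C 0 else C m \ Op (m - 1) with hAnndef
  have hAnnclosed : ∀ m, IsClosed (Ann m) := by
    intro m
    simp only [hAnndef]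
    split_ifs
    · exact hCclosed 0
    · exact (hCclosed m).sdiff (hOpopen (m-1))
  have hAnnsubC : ∀ m, Ann m ⊆ C m := by
    intro m
    simp only [hAnndef]
    split_ifs with h0
    · rw [h0]
    · exact diff_subset
  have hAnncover : A ⊆ ⋃ m, Ann m := by
    intro x hxA
    have hex : ∃ m, x ∈ C m := mem_iUnion.mp (hAcup hxA)
    set m := Nat.find hex with hmdef
    have hxm : x ∈ C m := Nat.find_spec hex
    rcases Nat.eq_zero_or_pos m with h0 | hpos
    · refine mem_iUnion.mpr ⟨0, ?_⟩
      show x ∈ if (0:ℕ) = 0 then C 0 else C 0 \ Op (0 - 1)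
      simp only [if_pos rfl]; rw [← h0]; exact hxm
    · refine mem_iUnion.mpr ⟨m, ?_⟩
      show x ∈ if m = 0 then C 0 else C m \ Op (m - 1)
      rw [if_neg (Nat.pos_iff_ne_zero.mp hpos)]
      refine ⟨hxm, fun hxOp => ?_⟩
      have : x ∈ C (m - 1) := hOpB _ ⟨hxOp, hAB hxA⟩
      exact Nat.find_min hex (Nat.sub_lt hpos Nat.one_pos) this
  -- separators for annuli
  set R : ℕ → Set K := fun m => if m < 2 then Op (m + 1) else Op (m + 1) \ C (m - 2) with hRdef
  have hRopen : ∀ m, IsOpen (R m) := by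
    intro m
    simp only [hRdef]
    split_ifs
    · exact hOpopen _
    · exact (hOpopen _).sdiff (hCclosed _)
  have hAnnsubR : ∀ m, Ann m ⊆ R m := by
    intro m x hx
    have hxC : x ∈ C m := hAnnsubC m hx
    have hxOp : x ∈ Op (m + 1) := hCsubOp m hxC
    show x ∈ if m < 2 then Op (m + 1) else Op (m + 1) \ C (m - 2)
    split_ifs with h2
    · exact hxOp
    · push_neg at h2
      refine ⟨hxOp, fun hxC2 => ?_⟩
      have hOpm : x ∈ Op (m - 1) := by
        have := hCsubOp (m - 2) hxC2
        have heq : m - 2 + 1 = m - 1 := by omega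
        rwa [heq] at this
      simp only [hAnndef, if_neg (by omega : ¬ m = 0)] at hx
      exact hx.2 hOpm
  have hRdisj : ∀ x ∈ B, ∀ m m' : ℕ, m + 3 ≤ m' → x ∈ R m → x ∈ R m' → False := by
    intro x hxB m m' hmm' hxm hxm'
    have hxOp : x ∈ Op (m + 1) := by
      simp only [hRdef] at hxm
      split_ifs at hxm
      · exact hxm
      · exact hxm.1
    have hxC : x ∈ C (m + 1) := hOpB _ ⟨hxOp, hxB⟩
    have hxC2 : x ∈ C (m' - 2) := hCmono (by omega) hxC
    simp only [hRdef, if_neg (by omega : ¬ m' < 2)] at hxm'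
    exact hxm'.2 hxC2
  -- main construction
  intro ι U hfin hopen hcov
  choose W hWopen hUW using fun i => isOpen_induced_iff.mp (hopen i)
  -- for each m, a shrink of the cover {W i} ∪ {(Ann m)ᶜ} of B
  have key : ∀ m : ℕ, ∃ Z : ι ⊕ Unit → Set K, (∀ j, IsOpen (Z j)) ∧
      (∀ i, Z (Sum.inl i) ⊆ W i) ∧ (Ann m ⊆ ⋃ i : ι, Z (Sum.inl i)) ∧
      (∀ x : ↥B, {j | x.1 ∈ Z j}.ncard ≤ n + 1) := by
    intro m
    set Wm : ι ⊕ Unit → Set K := Sum.elim W (fun _ => (Ann m)ᶜ) with hWmdef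
    have hWmopen : ∀ j, IsOpen (Wm j) := by
      rintro (i | u)
      · exact hWopen i
      · exact (hAnnclosed m).isOpen_compl
    have hWmcov : (⋃ j, (Subtype.val ⁻¹' Wm j : Set ↥B)) = univ := by
      ext ⟨x, hxB⟩
      simp only [mem_iUnion, mem_univ, iff_true, mem_preimage]
      by_cases hxAnn : x ∈ Ann m
      · have hxA : x ∈ A := hCsubA m (hAnnsubC m hxAnn)
        have : (⟨x, hxA⟩ : ↥A) ∈ ⋃ i, U i := hcov ▸ mem_univ _
        rcases mem_iUnion.mp this with ⟨i, hi⟩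
        rw [← hUW i] at hi
        exact ⟨Sum.inl i, hi⟩
      · exact ⟨Sum.inr (), hxAnn⟩
    obtain ⟨V', hV'open, hV'sub, hV'cov, hV'mult⟩ := h (ι ⊕ Unit) _ inferInstance
      (fun j => (hWmopen j).preimage continuous_subtype_val) hWmcov
    choose Z0 hZ0open hZ0V using fun j => isOpen_induced_iff.mp (hV'open j)
    refine ⟨fun j => Z0 j ∩ Wm j, fun j => (hZ0open j).inter (hWmopen j), ?_, ?_, ?_⟩
    · intro i; exact inter_subset_right
    · intro x hx
      have hxB : x ∈ B := hCsubB m (hAnnsubC m hx)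
      have : (⟨x, hxB⟩ : ↥B) ∈ ⋃ j, V' j := hV'cov ▸ mem_univ _
      rcases mem_iUnion.mp this with ⟨j, hj⟩
      rcases j with i | u
      · refine mem_iUnion.mpr ⟨i, ?_, ?_⟩
        · rw [← hZ0V (Sum.inl i)] at hj; exact hj
        · exact hV'sub (Sum.inl i) hj
      · exact absurd (hV'sub (Sum.inr u) hj) (not_not_intro hx)
    · intro x
      refine le_trans (Set.ncard_le_ncard ?_ (Set.toFinite _)) (hV'mult x)
      intro j hj
      show x ∈ V' j
      rw [← hZ0V j]
      exact hj.1
  choose Z hZopen hZsubW hZcov hZmult using key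
  -- final shrink
  refine ⟨fun i => Subtype.val ⁻¹' (⋃ m, Z m (Sum.inl i) ∩ R m), ?_, ?_, ?_, ?_⟩
  · intro i
    exact (isOpen_iUnion fun m => (hZopen m _).inter (hRopen m)).preimage continuous_subtype_val
  · intro i a ha
    rcases mem_iUnion.mp ha with ⟨m, hm⟩
    rw [← hUW i]
    exact hZsubW m i hm.1
  · rw [eq_univ_iff_forall]
    intro a
    rcases mem_iUnion.mp (hAnncover a.2) with ⟨m, hm⟩
    rcases mem_iUnion.mp (hZcov m hm) with ⟨i, hi⟩
    exact mem_iUnion.mpr ⟨i, mem_iUnion.mpr ⟨m, hi, hAnnsubR m hm⟩⟩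
  · intro a
    set x : K := a.1 with hxdef
    have hxB : x ∈ B := hAB a.2
    by_cases hex : ∃ m, x ∈ R m
    · set m₀ := Nat.find hex with hm₀def
      have hm₀ : x ∈ R m₀ := Nat.find_spec hex
      set T : ℕ → Set ι := fun m => {i | x ∈ Z m (Sum.inl i)} with hTdef
      have hTcard : ∀ m, (T m).ncard ≤ n + 1 := by
        intro m
        refine le_trans (ncard_inl_le {j | x ∈ Z m j} (T m) fun i hi => hi) ?_
        exact hZmult m ⟨x, hxB⟩
      have hsub : {i | a ∈ Subtype.val ⁻¹' (⋃ m, Z m (Sum.inl i) ∩ R m)} ⊆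
          T m₀ ∪ (T (m₀ + 1) ∪ T (m₀ + 2)) := by
        intro i hi
        rcases mem_iUnion.mp hi with ⟨m, hmZ, hmR⟩
        have h1 : m₀ ≤ m := Nat.find_le hmR
        have h2 : m ≤ m₀ + 2 := by
          by_contra hcon
          exact hRdisj x hxB m₀ m (by omega) hm₀ hmR
        have hm3 : m = m₀ ∨ m = m₀ + 1 ∨ m = m₀ + 2 := by omega
        rcases hm3 with rfl | rfl | rfl
        · exact mem_union_left _ hmZ
        · exact mem_union_right _ (mem_union_left _ hmZ)
        · exact mem_union_right _ (mem_union_right _ hmZ)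
      refine le_trans (Set.ncard_le_ncard hsub (Set.toFinite _)) ?_
      refine le_trans (Set.ncard_union_le _ _) ?_
      have hun := Set.ncard_union_le (T (m₀ + 1)) (T (m₀ + 2))
      have h0 := hTcard m₀
      have h1 := hTcard (m₀ + 1)
      have h2 := hTcard (m₀ + 2)
      omega
    · have hempty : {i | a ∈ Subtype.val ⁻¹' (⋃ m, Z m (Sum.inl i) ∩ R m)} = ∅ := by
        ext i
        simp only [mem_setOf_eq, mem_empty_iff_false, iff_false, mem_preimage]
        intro hi
        rcases mem_iUnion.mp hi with ⟨m, hm⟩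
        exact hex ⟨m, hm.2⟩
      rw [hempty]
      simp
end RelOpen

section Derived
variable (X : Type*) [TopologicalSpace X]

lemma fdDerived_zero : fdDerived X 0 = univ := by
  unfold fdDerived
  exact Ordinal.limitRecOn_zero _ _ _

lemma fdDerived_succ (o : Ordinal) :
    fdDerived X (Order.succ o) = fdDerived X o \ fdI X (fdDerived X o) := by
  unfold fdDerived
  exact Ordinal.limitRecOn_succ _ _ _ _

lemma fdDerived_limit {o : Ordinal} (ho : Order.IsSuccLimit o) :
    fdDerived X o = ⋂ (o' : Ordinal) (_ : o' < o), fdDerived X o' := by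
  unfold fdDerived
  exact Ordinal.limitRecOn_limit _ _ _ _ ho

lemma fdDerived_isClosed (o : Ordinal) : IsClosed (fdDerived X o) := by
  induction o using Ordinal.limitRecOn with
  | zero => rw [fdDerived_zero]; exact isClosed_univ
  | add_one o ih =>
    rw [Ordinal.add_one_eq_succ, fdDerived_succ]
    set S := fdDerived X o
    have : S \ fdI X S = S ∩ (⋃₀ {U | IsOpen U ∧ FinDimSpace ↥(U ∩ S)})ᶜ := by
      ext x
      simp only [mem_diff, mem_inter_iff, mem_compl_iff, mem_sUnion, fdI, mem_setOf_eq]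
      constructor
      · rintro ⟨hxS, hx⟩
        exact ⟨hxS, fun ⟨U, ⟨hU1, hU2⟩, hxU⟩ => hx ⟨hxS, U, hU1, hxU, hU2⟩⟩
      · rintro ⟨hxS, hx⟩
        exact ⟨hxS, fun ⟨_, U, hU1, hxU, hU2⟩ => hx ⟨U, ⟨hU1, hU2⟩, hxU⟩⟩
    rw [this]
    exact ih.inter (isClosed_compl_iff.mpr (isOpen_sUnion fun U hU => hU.1))
  | limit o ho ih =>
    rw [fdDerived_limit X ho]
    exact isClosed_iInter fun o' => isClosed_iInter fun h => ih o' h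

lemma fdDerived_mono (b : Ordinal) : ∀ a ≤ b, fdDerived X b ⊆ fdDerived X a := by
  induction b using Ordinal.limitRecOn with
  | zero =>
    intro a ha
    rw [nonpos_iff_eq_zero.mp ha]
  | add_one b ih =>
    intro a ha
    rw [Ordinal.add_one_eq_succ] at ha ⊢
    rcases Order.le_succ_iff_eq_or_le.mp ha with rfl | ha'
    · exact subset_rfl
    · rw [fdDerived_succ]
      exact diff_subset.trans (ih a ha')
  | limit b hb ih =>
    intro a ha
    rcases eq_or_lt_of_le ha with rfl | hlt
    · exact subset_rfl
    · intro x hx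
      rw [fdDerived_limit X hb] at hx
      simp only [mem_iInter] at hx
      exact hx a hlt

end Derived

section Fsigma
variable {K : Type*} [MetricSpace K]

lemma isOpen_eq_iUnion_closed {U : Set K} (hU : IsOpen U) :
    ∃ F : ℕ → Set K, (∀ m, IsClosed (F m)) ∧ (∀ m, F m ⊆ U) ∧ U ⊆ ⋃ m, F m := by
  refine ⟨fun m => {x | ∀ y ∉ U, 1 / (m + 1 : ℝ) ≤ dist x y}, ?_, ?_, ?_⟩
  · intro m
    show IsClosed {x | ∀ y ∉ U, 1 / (m + 1 : ℝ) ≤ dist x y}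
    have : {x | ∀ y ∉ U, 1 / (m + 1 : ℝ) ≤ dist x y} =
        ⋂ y ∈ Uᶜ, {x | 1 / (m + 1 : ℝ) ≤ dist x y} := by
      ext x; simp [mem_compl_iff]
    rw [this]
    exact isClosed_biInter fun y _ =>
      isClosed_le continuous_const (continuous_id.dist continuous_const)
  · intro m x hx
    replace hx : ∀ y ∉ U, 1 / (m + 1 : ℝ) ≤ dist x y := hx
    by_contra hxU
    have := hx x hxU
    simp only [dist_self] at this
    have : (0:ℝ) < 1 / (m+1) := by positivity
    linarith
  · intro x hxU
    rcases Metric.isOpen_iff.mp hU x hxU with ⟨ε, hε, hball⟩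
    obtain ⟨m, hm⟩ := exists_nat_one_div_lt hε
    refine mem_iUnion.mpr ⟨m, show ∀ y ∉ U, 1 / (m + 1 : ℝ) ≤ dist x y from fun y hy => ?_⟩
    have : ¬ dist y x < ε := fun hlt => hy (hball hlt)
    rw [dist_comm] at this
    linarith
end Fsigma

section Cover
variable {K : Type*} [MetricSpace K] [SecondCountableTopology K]

lemma fdI_exists_cover (S : Set K) (hS : IsClosed S) :
    ∃ 𝒞 : Set (Set K), 𝒞.Countable ∧ (∀ C ∈ 𝒞, IsClosed C ∧ FinDimSpace ↥C) ∧
      fdI K S ⊆ ⋃₀ 𝒞 := by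
  obtain ⟨T, hTc, hTsub, hTU⟩ := TopologicalSpace.isOpen_sUnion_countable
    {U : Set K | IsOpen U ∧ FinDimSpace ↥(U ∩ S)} (fun s hs => hs.1)
  haveI := hTc.to_subtype
  have hFσ : ∀ U : T, ∃ F : ℕ → Set K, (∀ m, IsClosed (F m)) ∧ (∀ m, F m ⊆ U.1) ∧
      U.1 ⊆ ⋃ m, F m := fun U => isOpen_eq_iUnion_closed (hTsub U.2).1
  choose F hFcl hFsub hFcov using hFσ
  refine ⟨range (fun p : T × ℕ => F p.1 p.2 ∩ S), countable_range _, ?_, ?_⟩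
  · rintro C ⟨⟨U, m⟩, rfl⟩
    refine ⟨(hFcl U m).inter hS, ?_⟩
    obtain ⟨n, hn⟩ := (hTsub U.2).2
    have hsub : F U m ∩ S ⊆ U.1 ∩ S := inter_subset_inter_left S (hFsub U m)
    exact ⟨n, covDimLE_mono_closed hsub ((hFcl U m).inter hS) hn⟩
  · rintro x ⟨hxS, U₀, hU₀o, hxU₀, hU₀fd⟩
    have hx' : x ∈ ⋃₀ T := by
      rw [hTU]
      exact ⟨U₀, ⟨hU₀o, hU₀fd⟩, hxU₀⟩
    rcases hx' with ⟨U, hUT, hxU⟩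
    rcases mem_iUnion.mp (hFcov ⟨U, hUT⟩ hxU) with ⟨m, hm⟩
    exact ⟨F ⟨U, hUT⟩ m ∩ S, ⟨⟨⟨U, hUT⟩, m⟩, rfl⟩, hm, hxS⟩
end Cover

/-- a compact metrizable space is strongly countable dimensional iff
some countable-indexed derived set `K^[α]` is empty. -/
theorem scd_iff_fdDerived_eq_empty
    (K : Type*) [TopologicalSpace K] [CompactSpace K]
    [TopologicalSpace.MetrizableSpace K] :
    StronglyCountableDim K ↔
      ∃ α : Ordinal, α.card ≤ Cardinal.aleph0 ∧ fdDerived K α = ∅ := by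
  letI : MetricSpace K := TopologicalSpace.metrizableSpaceMetric K
  haveI : SecondCountableTopology K := inferInstance
  constructor
  · rintro ⟨F, hFcl, hFfd, hFU⟩
    have claim : ∀ S : Set K, IsClosed S → S.Nonempty → ∃ x, x ∈ fdI K S := by
      intro S hScl hSne
      haveI : CompactSpace ↥S := isCompact_iff_compactSpace.mp hScl.isCompact
      haveI : Nonempty ↥S := hSne.to_subtype
      have hclosed : ∀ n, IsClosed (Subtype.val ⁻¹' F n : Set ↥S) :=
        fun n => (hFcl n).preimage continuous_subtype_val
      have hcover : (⋃ n, (Subtype.val ⁻¹' F n : Set ↥S)) = univ := by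
        rw [eq_univ_iff_forall]
        intro a
        have : a.1 ∈ ⋃ n, F n := hFU ▸ mem_univ _
        rcases mem_iUnion.mp this with ⟨n, hn⟩
        exact mem_iUnion.mpr ⟨n, hn⟩
      obtain ⟨n, ⟨⟨x, hxS⟩, hxint⟩⟩ := nonempty_interior_of_iUnion_of_closed hclosed hcover
      obtain ⟨W, hWopen, hWeq⟩ := isOpen_induced_iff.mp
        (isOpen_interior (s := (Subtype.val ⁻¹' F n : Set ↥S)))
      have hxW : x ∈ W := by
        have h1 : (⟨x, hxS⟩ : ↥S) ∈ Subtype.val ⁻¹' W := hWeq ▸ hxint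
        exact h1
      have hWS : W ∩ S ⊆ F n := by
        intro y hy
        have h1 : (⟨y, hy.2⟩ : ↥S) ∈ Subtype.val ⁻¹' W := hy.1
        rw [hWeq] at h1
        have h2 : (⟨y, hy.2⟩ : ↥S) ∈ (Subtype.val ⁻¹' F n : Set ↥S) := interior_subset h1
        exact h2
      rcases Metric.isOpen_iff.mp hWopen x hxW with ⟨ε, hε, hball⟩
      obtain ⟨n₀, hn₀⟩ := hFfd n
      set B' : Set K := Metric.closedBall x (ε/2) ∩ S with hB'def
      have hB'closed : IsClosed B' := Metric.isClosed_closedBall.inter hScl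
      have hB'sub : B' ⊆ F n := by
        intro y hy
        refine hWS ⟨hball ?_, hy.2⟩
        have h2 := hy.1
        rw [Metric.mem_closedBall] at h2
        rw [Metric.mem_ball]
        linarith
      have hB'fd : CovDimLE ↥B' n₀ := covDimLE_mono_closed hB'sub hB'closed hn₀
      have hrel : CovDimLE ↥(Metric.ball x (ε/2) ∩ S) (3 * n₀ + 2) := by
        refine covDimLE_relOpen (O := Metric.ball x (ε/2)) hB'closed.isCompact Metric.isOpen_ball ?_ hB'fd
        ext y
        simp only [mem_inter_iff, hB'def, Metric.mem_ball, Metric.mem_closedBall]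
        constructor
        · rintro ⟨h1, h2⟩; exact ⟨⟨le_of_lt h1, h2⟩, h1⟩
        · rintro ⟨⟨h1, h2⟩, h3⟩; exact ⟨h3, h2⟩
      exact ⟨x, hxS, Metric.ball x (ε/2), Metric.isOpen_ball,
        Metric.mem_ball_self (by linarith), ⟨3 * n₀ + 2, hrel⟩⟩
    set ω₁ : Ordinal := (Cardinal.aleph 1).ord with hw1
    suffices hsuff : ∃ α, α < ω₁ ∧ fdDerived K α = ∅ by
      obtain ⟨α, hα, hαe⟩ := hsuff
      refine ⟨α, ?_, hαe⟩
      have h1 := Cardinal.lt_ord.mp hα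
      rwa [← Ordinal.succ_zero, Cardinal.aleph_succ, Cardinal.aleph_zero,
        Order.lt_succ_iff] at h1
    by_contra hcon
    push_neg at hcon
    obtain ⟨bb, hbbc, -, hbasis⟩ := TopologicalSpace.exists_countable_basis K
    have hch : ∀ α : ↥(Set.Iio ω₁), ∃ v : Set K, v ∈ bb ∧
        (v ∩ fdDerived K α.1).Nonempty ∧ v ∩ fdDerived K (Order.succ α.1) = ∅ := by
      rintro ⟨α, hα⟩
      have hSne : (fdDerived K α).Nonempty := hcon α hα
      obtain ⟨x, hxS, U, hUo, hxU, hUfd⟩ := claim _ (fdDerived_isClosed K α) hSne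
      obtain ⟨v, hv, hxv, hvU⟩ := hbasis.exists_subset_of_mem_open hxU hUo
      refine ⟨v, hv, ⟨x, hxv, hxS⟩, ?_⟩
      rw [eq_empty_iff_forall_notMem]
      rintro y ⟨hyv, hyS⟩
      rw [fdDerived_succ] at hyS
      exact hyS.2 ⟨hyS.1, U, hUo, hvU hyv, hUfd⟩
    choose f hf1 hf2 hf3 using hch
    haveI := hbbc.to_subtype
    have hinj : Function.Injective (fun α : ↥(Set.Iio ω₁) => (⟨f α, hf1 α⟩ : ↥bb)) := by
      intro a b hab
      simp only [Subtype.mk.injEq] at hab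
      by_contra hne
      have hne' : a.1 ≠ b.1 := fun h => hne (Subtype.ext h)
      rcases hne'.lt_or_gt with hlt | hlt
      · obtain ⟨y, hy1, hy2⟩ := hf2 b
        have h1 : y ∈ f a ∩ fdDerived K (Order.succ a.1) :=
          ⟨hab ▸ hy1, fdDerived_mono K b.1 _ (Order.succ_le_of_lt hlt) hy2⟩
        rw [hf3 a] at h1
        exact h1
      · obtain ⟨y, hy1, hy2⟩ := hf2 a
        have h1 : y ∈ f b ∩ fdDerived K (Order.succ b.1) :=
          ⟨hab ▸ hy1, fdDerived_mono K a.1 _ (Order.succ_le_of_lt hlt) hy2⟩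
        rw [hf3 b] at h1
        exact h1
    haveI : Countable ↥(Set.Iio ω₁) := hinj.countable
    have hle : Cardinal.mk ↥(Set.Iio ω₁) ≤ Cardinal.aleph0 := Cardinal.mk_le_aleph0
    rw [Ordinal.mk_Iio_ordinal, Cardinal.card_ord, Cardinal.lift_le_aleph0] at hle
    exact absurd hle (not_le.mpr Cardinal.aleph0_lt_aleph_one)
  · rintro ⟨α, hcard, hαe⟩
    haveI hIio : Countable ↥(Set.Iio α) := by
      rw [← Cardinal.mk_le_aleph0_iff, Ordinal.mk_Iio_ordinal, Cardinal.lift_le_aleph0]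
      exact hcard
    have hcov : ∀ β : ↥(Set.Iio α), ∃ 𝒞 : Set (Set K), 𝒞.Countable ∧
        (∀ C ∈ 𝒞, IsClosed C ∧ FinDimSpace ↥C) ∧ fdI K (fdDerived K β.1) ⊆ ⋃₀ 𝒞 :=
      fun β => fdI_exists_cover _ (fdDerived_isClosed K β.1)
    choose 𝒞 h𝒞c h𝒞mem h𝒞cov using hcov
    set 𝒟 : Set (Set K) := insert ∅ (⋃ β : ↥(Set.Iio α), 𝒞 β) with h𝒟
    have h𝒟c : 𝒟.Countable := (Set.countable_iUnion h𝒞c).insert ∅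
    have h𝒟mem : ∀ C ∈ 𝒟, IsClosed C ∧ FinDimSpace ↥C := by
      intro C hC
      rcases mem_insert_iff.mp hC with rfl | hC'
      · exact ⟨isClosed_empty, finDimSpace_empty⟩
      · rcases mem_iUnion.mp hC' with ⟨β, hβ⟩
        exact h𝒞mem β C hβ
    have h𝒟cov : ∀ x : K, ∃ C ∈ 𝒟, x ∈ C := by
      intro x
      have hαmem : α ∈ {γ : Ordinal | x ∉ fdDerived K γ} := by
        rw [mem_setOf_eq, hαe]; exact notMem_empty x
      have hne : {γ : Ordinal | x ∉ fdDerived K γ}.Nonempty := ⟨α, hαmem⟩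
      set γ := sInf {γ : Ordinal | x ∉ fdDerived K γ} with hγ
      have hγmem : x ∉ fdDerived K γ := csInf_mem hne
      have hltmem : ∀ δ, δ < γ → x ∈ fdDerived K δ := by
        intro δ hδ
        by_contra hxd
        exact notMem_of_lt_csInf hδ (OrderBot.bddBelow _) hxd
      rcases Ordinal.zero_or_succ_or_isSuccLimit γ with h0 | ⟨β, hβ⟩ | hlim
      · rw [h0, fdDerived_zero] at hγmem; exact absurd (mem_univ x) hγmem
      · have hβγ : β < γ := by rw [← hβ]; exact Order.lt_succ β
        have hxβ : x ∈ fdDerived K β := hltmem β hβγ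
        have hxs : x ∉ fdDerived K (Order.succ β) := hβ ▸ hγmem
        rw [fdDerived_succ] at hxs
        have hxfdI : x ∈ fdI K (fdDerived K β) := by
          by_contra hno
          exact hxs ⟨hxβ, hno⟩
        have hβα : β < α := lt_of_lt_of_le hβγ (csInf_le' hαmem)
        rcases h𝒞cov ⟨β, hβα⟩ hxfdI with ⟨C, hC𝒞, hxC⟩
        exact ⟨C, mem_insert_of_mem _ (mem_iUnion.mpr ⟨⟨β, hβα⟩, hC𝒞⟩), hxC⟩
      · exfalso
        apply hγmem
        rw [fdDerived_limit K hlim]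
        exact mem_iInter.mpr fun δ => mem_iInter.mpr fun hδ => hltmem δ hδ
    obtain ⟨g, hg⟩ := h𝒟c.exists_eq_range (insert_nonempty _ _)
    refine ⟨g, ?_, ?_, ?_⟩
    · intro m
      exact (h𝒟mem (g m) (hg ▸ mem_range_self m)).1
    · intro m
      exact (h𝒟mem (g m) (hg ▸ mem_range_self m)).2
    · rw [eq_univ_iff_forall]
      intro x
      rcases h𝒟cov x with ⟨C, hC, hxC⟩
      rw [hg] at hC
      rcases hC with ⟨m, rfl⟩
      exact mem_iUnion.mpr ⟨m, hxC⟩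

end
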